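/- For all sufficiently large n the following holds. Let f : {1,…,n} → ℝ take at most ℓ ≤ √n distinct values, let v ∈ ℝ, and let k = |{i : f(i) ≥ v}| with k ≤ n/2. Then {1,…,n} can be partitioned into: the set S₀ = {i : f(i) ≥ v} of size k; buckets S₁,…,S_r such that f is constant on each S_j with value strictly less than v, each bucket size |S_j| lies in the interval [√n/10, 2√n/10], the total bucket size Σ_{j=1}^{r} |S_j| lies in [4n/10 − 2√n/10, 4n/10], and the number of buckets satisfies 2√n − 1 ≤ r ≤ 4√n; and a residual set R with |R| ≥ n/10. -/

import Mathlib

lemma exists_chunks (n : ℕ) (f : Fin n → ℝ) (b : ℕ) (hb : 0 < b) (B : Finset (Fin n)) :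
    ∃ L : List (Finset (Fin n)), L.Pairwise Disjoint ∧
      (∀ T ∈ L, T ⊆ B ∧ T.card = b ∧ ∃ c : ℝ, ∀ i ∈ T, f i = c) ∧
      B.card ≤ b * L.length + (b - 1) * (B.image f).card := by
  induction B using Finset.strongInduction with
  | _ B ih =>
    by_cases h : ∃ c ∈ B.image f, b ≤ (B.filter (fun i => f i = c)).card
    · obtain ⟨c, hc, hcard⟩ := h
      obtain ⟨T, hTsub, hTcard⟩ := Finset.exists_subset_card_eq hcard
      have hTB : T ⊆ B := hTsub.trans (Finset.filter_subset _ _)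
      have hTne : T.Nonempty := Finset.card_pos.mp (hTcard ▸ hb)
      have hssub : B \ T ⊂ B := by
        obtain ⟨x, hx⟩ := hTne
        exact Finset.ssubset_iff_of_subset Finset.sdiff_subset |>.mpr ⟨x, hTB hx, by simp [hx]⟩
      obtain ⟨L, hpw, hmem, hcnt⟩ := ih _ hssub
      refine ⟨T :: L, ?_, ?_, ?_⟩
      · refine List.Pairwise.cons ?_ hpw
        intro T' hT'
        exact (Finset.disjoint_of_subset_left (hmem T' hT').1 Finset.sdiff_disjoint).symm
      · intro T' hT'
        rcases List.mem_cons.mp hT' with rfl | hT'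
        · exact ⟨hTB, hTcard, ⟨c, fun i hi => (Finset.mem_filter.mp (hTsub hi)).2⟩⟩
        · obtain ⟨h1, h2, h3⟩ := hmem T' hT'
          exact ⟨h1.trans Finset.sdiff_subset, h2, h3⟩
      · have hble : b ≤ B.card := hTcard ▸ Finset.card_le_card hTB
        have h1 : B.card = (B \ T).card + b := by
          rw [Finset.card_sdiff_of_subset hTB, hTcard]; omega
        have h2 : (Finset.image f (B \ T)).card ≤ (Finset.image f B).card :=
          Finset.card_le_card (Finset.image_subset_image Finset.sdiff_subset)
        simp only [List.length_cons]
        calc B.card = (B \ T).card + b := h1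
          _ ≤ b * L.length + (b - 1) * (Finset.image f (B \ T)).card + b := by omega
          _ ≤ b * (L.length + 1) + (b - 1) * (Finset.image f B).card := by
              have := Nat.mul_le_mul_left (b - 1) h2
              ring_nf
              omega
    · push_neg at h
      refine ⟨[], by simp, by simp, ?_⟩
      rw [Finset.card_eq_sum_card_fiberwise (fun x hx => Finset.mem_image_of_mem f hx)]
      simp only [List.length_nil, Nat.mul_zero, Nat.zero_add]
      calc ∑ c ∈ B.image f, (B.filter (fun i => f i = c)).card
          ≤ ∑ _c ∈ B.image f, (b - 1) :=
            Finset.sum_le_sum (fun c hc => Nat.le_sub_one_of_lt (h c hc))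
        _ = (B.image f).card * (b - 1) := by rw [Finset.sum_const, smul_eq_mul]
        _ = (b - 1) * (B.image f).card := Nat.mul_comm _ _

set_option maxHeartbeats 2000000 in
theorem stmt_3 :
    ∃ N : ℕ, ∀ n : ℕ, N ≤ n → ∀ f : Fin n → ℝ, ∀ v : ℝ,
    ((Finset.univ.image f).card : ℝ) ≤ Real.sqrt n →
    ((Finset.univ.filter (fun i => v ≤ f i)).card : ℝ) ≤ (n : ℝ) / 2 →
    ∃ (r : ℕ) (S : Fin r → Finset (Fin n)) (R : Finset (Fin n)),
      (∀ j, Disjoint (Finset.univ.filter (fun i => v ≤ f i)) (S j)) ∧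
      Disjoint (Finset.univ.filter (fun i => v ≤ f i)) R ∧
      (∀ j, Disjoint (S j) R) ∧
      (∀ j j', j ≠ j' → Disjoint (S j) (S j')) ∧
      (Finset.univ.filter (fun i => v ≤ f i)) ∪ R ∪ Finset.univ.biUnion S = Finset.univ ∧
      (∀ j, ∃ c : ℝ, c < v ∧ ∀ i ∈ S j, f i = c) ∧
      (∀ j, Real.sqrt n / 10 ≤ ((S j).card : ℝ) ∧ ((S j).card : ℝ) ≤ 2 * Real.sqrt n / 10) ∧
      4 * (n : ℝ) / 10 - 2 * Real.sqrt n / 10 ≤ (∑ j, ((S j).card : ℝ)) ∧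
      (∑ j, ((S j).card : ℝ)) ≤ 4 * (n : ℝ) / 10 ∧
      2 * Real.sqrt n - 1 ≤ (r : ℝ) ∧ (r : ℝ) ≤ 4 * Real.sqrt n ∧
      (n : ℝ) / 10 ≤ (R.card : ℝ) := by
  use 100
  intro n hn f v himg hk
  set s : ℝ := Real.sqrt n with hs_def
  have hn0 : (0:ℝ) ≤ n := Nat.cast_nonneg n
  have hs0 : 0 ≤ s := Real.sqrt_nonneg _
  have hsq : s * s = n := Real.mul_self_sqrt hn0
  have hs10 : 10 ≤ s := by
    have : (10:ℝ) = Real.sqrt 100 := by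
      rw [show (100:ℝ) = 10^2 by norm_num, Real.sqrt_sq (by norm_num)]
    rw [this, hs_def]
    exact Real.sqrt_le_sqrt (by exact_mod_cast hn)
  -- bucket size
  set b : ℕ := ⌈s / 10⌉₊ with hb_def
  have hbl : s / 10 ≤ (b:ℝ) := Nat.le_ceil _
  have hb1 : 1 ≤ b := Nat.one_le_ceil_iff.mpr (by linarith : (0:ℝ) < s / 10)
  have hb0 : 0 < b := hb1
  have hbR0 : (0:ℝ) < b := by exact_mod_cast hb0
  have hbu : (b:ℝ) ≤ 2 * s / 10 := by
    have h1 : (b:ℝ) < s / 10 + 1 := Nat.ceil_lt_add_one (by positivity)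
    linarith
  -- the below-threshold set
  set K : Finset (Fin n) := Finset.univ.filter (fun i => v ≤ f i) with hK_def
  set B : Finset (Fin n) := Finset.univ.filter (fun i => ¬ v ≤ f i) with hB_def
  have hKB : K.card + B.card = n := by
    rw [hK_def, hB_def, Finset.card_filter_add_card_filter_not]
    simp
  have hBcard : (n:ℝ) / 2 ≤ (B.card : ℝ) := by
    have : (K.card : ℝ) + (B.card : ℝ) = n := by exact_mod_cast hKB
    linarith
  obtain ⟨L, hpw, hmem, hcnt⟩ := exists_chunks n f b hb0 B
  -- mass lower bound on buckets
  have hImB : ((B.image f).card : ℝ) ≤ s := by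
    refine le_trans ?_ himg
    exact_mod_cast Finset.card_le_card (Finset.image_subset_image (Finset.subset_univ B))
  have hbm1 : ((b:ℝ) - 1) ≤ s / 10 := by
    linarith [Nat.ceil_lt_add_one (show (0:ℝ) ≤ s/10 by positivity)]
  have hcntR : (B.card : ℝ) ≤ (b:ℝ) * L.length + ((b:ℝ) - 1) * (B.image f).card := by
    have hcast : ((b - 1 : ℕ) : ℝ) = (b:ℝ) - 1 := by
      rw [Nat.cast_sub hb1]; norm_num
    calc (B.card : ℝ) ≤ ((b * L.length + (b - 1) * (B.image f).card : ℕ) : ℝ) := by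
          exact_mod_cast hcnt
      _ = (b:ℝ) * L.length + ((b:ℝ) - 1) * (B.image f).card := by push_cast [hcast]; ring
  have hlen : 4 * (n:ℝ) / 10 ≤ (b:ℝ) * L.length := by
    have h1 : ((b:ℝ) - 1) * (B.image f).card ≤ (s/10) * s := by
      apply mul_le_mul hbm1 hImB (Nat.cast_nonneg _) (by positivity)
    nlinarith
  -- choose r
  set m : ℕ := (4 * n) / 10 with hm_def
  set r : ℕ := m / b with hr_def
  have hr0 : (0:ℝ) ≤ (r:ℝ) := Nat.cast_nonneg r
  have hm_ub : (m:ℝ) ≤ 4 * (n:ℝ) / 10 := by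
    calc (m:ℝ) ≤ ((4*n : ℕ):ℝ) / ((10:ℕ):ℝ) := Nat.cast_div_le
      _ = 4 * (n:ℝ) / 10 := by push_cast; ring
  have hm_lb : 4 * (n:ℝ) / 10 - 1 < (m:ℝ) := by
    have h1 : 4 * n < 10 * m + 10 := by
      have := Nat.div_add_mod (4*n) 10
      have h2 : (4*n) % 10 < 10 := Nat.mod_lt _ (by norm_num)
      omega
    have : (4*(n:ℝ)) < 10 * m + 10 := by exact_mod_cast h1
    linarith
  have hrb_ub : (r:ℝ) * b ≤ (m:ℝ) := by exact_mod_cast Nat.div_mul_le_self m b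
  have hrb_lb : (m:ℝ) ≤ (r:ℝ) * b + ((b:ℝ) - 1) := by
    have h1 : m ≤ r * b + (b - 1) := by
      have e := Nat.div_add_mod m b
      have h2 : m % b ≤ b - 1 := Nat.le_sub_one_of_lt (Nat.mod_lt _ hb0)
      calc m = b * r + m % b := e.symm
        _ ≤ b * r + (b - 1) := Nat.add_le_add_left h2 _
        _ = r * b + (b - 1) := by rw [Nat.mul_comm]
    calc (m:ℝ) ≤ ((r * b + (b-1) : ℕ):ℝ) := by exact_mod_cast h1
      _ = (r:ℝ)*b + ((b:ℝ)-1) := by push_cast [Nat.cast_sub hb1]; ring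
  have hrb_lb' : 4 * (n:ℝ) / 10 - 2 * s / 10 ≤ (r:ℝ) * b := by linarith
  have hrlen : r ≤ L.length := by
    have h1 : (r:ℝ) * b ≤ (b:ℝ) * L.length := by linarith
    have h2 : (r:ℝ) ≤ (L.length : ℝ) := by
      rw [mul_comm (b:ℝ) _] at h1
      exact le_of_mul_le_mul_right h1 hbR0
    exact_mod_cast h2
  -- the buckets
  refine ⟨r, fun j => L.get ⟨j.1, lt_of_lt_of_le j.2 hrlen⟩, ?_⟩
  set S : Fin r → Finset (Fin n) := fun j => L.get ⟨j.1, lt_of_lt_of_le j.2 hrlen⟩ with hS_def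
  have hSprop : ∀ j, S j ⊆ B ∧ (S j).card = b ∧ ∃ c : ℝ, ∀ i ∈ S j, f i = c :=
    fun j => hmem _ (L.get_mem _)
  have hSdisj : ∀ j j', j ≠ j' → Disjoint (S j) (S j') := by
    intro j j' hne
    have hpg := List.pairwise_iff_get.mp hpw
    rcases lt_or_gt_of_ne (Fin.val_ne_of_ne hne) with h | h
    · exact hpg _ _ h
    · exact (hpg _ _ h).symm
  have hKBdisj : Disjoint K B := Finset.disjoint_filter_filter_not _ _ _
  set X : Finset (Fin n) := K ∪ Finset.univ.biUnion S with hX_def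
  have hXdisj : Disjoint X (Finset.univ \ X) := Finset.sdiff_disjoint.symm
  have hSX : ∀ j, S j ⊆ X := fun j =>
    (Finset.subset_biUnion_of_mem S (Finset.mem_univ j)).trans Finset.subset_union_right
  -- sum of bucket cards
  have hcards : ∀ j : Fin r, ((S j).card : ℝ) = (b:ℝ) := fun j => by
    exact_mod_cast congrArg Nat.cast (hSprop j).2.1
  have hsum : (∑ j : Fin r, ((S j).card:ℝ)) = (r:ℝ) * b := by
    rw [Finset.sum_congr rfl (fun j _ => hcards j), Finset.sum_const, Finset.card_univ,
      Fintype.card_fin, nsmul_eq_mul]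
  refine ⟨Finset.univ \ X, ?_, ?_, ?_, hSdisj, ?_, ?_, ?_, ?_, ?_, ?_, ?_, ?_⟩
  · exact fun j => Finset.disjoint_of_subset_right (hSprop j).1 hKBdisj
  · exact Finset.disjoint_of_subset_left Finset.subset_union_left hXdisj
  · exact fun j => Finset.disjoint_of_subset_left (hSX j) hXdisj
  · -- union = univ
    ext i
    simp only [Finset.mem_union, Finset.mem_sdiff, Finset.mem_univ, hX_def, iff_true]
    tauto
  · -- monochromatic, c < v
    intro j
    obtain ⟨hsub, hcard, c, hc⟩ := hSprop j
    refine ⟨c, ?_, hc⟩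
    obtain ⟨i, hi⟩ := Finset.card_pos.mp (hcard ▸ hb0)
    have hiB := hsub hi
    rw [hB_def, Finset.mem_filter] at hiB
    rw [← hc i hi]
    exact lt_of_not_ge hiB.2
  · intro j
    rw [hcards j]
    exact ⟨hbl, hbu⟩
  · rw [hsum]; exact hrb_lb'
  · rw [hsum]; linarith
  · -- r lower bound
    have h1 : (r:ℝ) * b ≤ (r:ℝ) * (2 * s / 10) := mul_le_mul_of_nonneg_left hbu hr0
    nlinarith
  · -- r upper bound
    have h1 : (r:ℝ) * (s / 10) ≤ (r:ℝ) * b := mul_le_mul_of_nonneg_left hbl hr0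
    nlinarith
  · -- R card
    have hKbU : Disjoint K (Finset.univ.biUnion S) := by
      rw [Finset.disjoint_biUnion_right]
      exact fun j _ => Finset.disjoint_of_subset_right (hSprop j).1 hKBdisj
    have hbUcard : (Finset.univ.biUnion S).card = r * b := by
      rw [Finset.card_biUnion (fun j _ j' _ h => hSdisj j j' h)]
      rw [Finset.sum_congr rfl (fun j _ => (hSprop j).2.1), Finset.sum_const,
        Finset.card_univ, Fintype.card_fin, smul_eq_mul]
    have hXcard : X.card = K.card + r * b := by
      rw [hX_def, Finset.card_union_of_disjoint hKbU, hbUcard]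
    have hXn : X.card ≤ n := by
      have := Finset.card_le_univ X
      simpa using this
    have hRcard : (Finset.univ \ X).card = n - X.card := by
      rw [Finset.card_sdiff_of_subset (Finset.subset_univ X)]
      simp
    have hRR : ((Finset.univ \ X).card : ℝ) = (n:ℝ) - (K.card:ℝ) - (r:ℝ)*(b:ℝ) := by
      rw [hRcard, Nat.cast_sub hXn, hXcard]
      push_cast
      ring
    rw [hRR]
    linarith
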